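/- Let M ⊂ ℝⁿ be a helix hypersurface with respect to a fixed unit direction d, and let α : I → M be a unit-speed geodesic on M with nonvanishing curvature. Then the tangent indicatrix α'(s), reparametrized by arclength, is a general helix (spherical helix) on the unit hypersphere S^{n-1} with axis d. -/

import Mathlib

open scoped RealInnerProductSpace

/-- Let `M ⊂ ℝⁿ` be a helix hypersurface with respect to a fixed
unit direction `d`, and let `α` be a unit-speed geodesic on `M` with
nonvanishing curvature. Then the tangent indicatrix `β = α'`, reparametrized
by its arclength `sβ` (with inverse `ψ`), is a general helix (spherical helix)
on the unit hypersphere `S^{n-1}` with axis `d`. -/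
theorem tangent_indicatrix_of_geodesic_is_spherical_helix
    (n : ℕ) (M : Set (EuclideanSpace ℝ (Fin n)))
    (ξ : EuclideanSpace ℝ (Fin n) → EuclideanSpace ℝ (Fin n))
    (hξunit : ∀ p ∈ M, ‖ξ p‖ = 1)
    (d : EuclideanSpace ℝ (Fin n)) (hd : ‖d‖ = 1)
    (hhelix : ∃ c : ℝ, ∀ p ∈ M, ⟪d, ξ p⟫ = c)
    (I : Set ℝ) (hconn : IsPreconnected I)
    (α : ℝ → EuclideanSpace ℝ (Fin n))
    (hαM : ∀ s ∈ I, α s ∈ M)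
    (hunit : ∀ s ∈ I, ‖deriv α s‖ = 1)
    (lam : ℝ → ℝ) (hlamcont : ContinuousOn lam I)
    (hgeo : ∀ s ∈ I, deriv (deriv α) s = lam s • ξ (α s))
    (hκpos : ∀ s ∈ I, 0 < ‖deriv (deriv α) s‖)
    (β : ℝ → EuclideanSpace ℝ (Fin n)) (hβ : β = deriv α)
    (sβ ψ : ℝ → ℝ)
    (hsβ : ∀ s ∈ I, HasDerivAt sβ ‖deriv β s‖ s)
    (hψinv : ∀ s ∈ I, ψ (sβ s) = s)
    (hψd : ∀ s ∈ I, HasDerivAt ψ ‖deriv β s‖⁻¹ (sβ s)) :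
    (∀ s ∈ I, β s ∈ Metric.sphere (0 : EuclideanSpace ℝ (Fin n)) 1) ∧
      ∃ c : ℝ, ∀ s ∈ I, ⟪deriv (β ∘ ψ) (sβ s), d⟫ = c := by
  obtain ⟨c, hc⟩ := hhelix
  -- lam never vanishes on I
  have hlamne : ∀ s ∈ I, lam s ≠ 0 := by
    intro s hs h0
    have := hκpos s hs
    rw [hgeo s hs, h0, zero_smul, norm_zero] at this
    exact lt_irrefl 0 this
  -- main computation: the inner product equals (lam s / |lam s|) * c
  have key : ∀ s ∈ I, ⟪deriv (β ∘ ψ) (sβ s), d⟫ = (lam s / |lam s|) * c := by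
    intro s hs
    have hne : deriv (deriv α) s ≠ 0 := by
      intro h
      have := hκpos s hs
      rw [h, norm_zero] at this
      exact lt_irrefl 0 this
    have hdiff : DifferentiableAt ℝ (deriv α) s := by
      by_contra h
      exact hne (deriv_zero_of_not_differentiableAt h)
    have hβd : HasDerivAt β (deriv β s) (ψ (sβ s)) := by
      rw [hψinv s hs, hβ]
      exact hdiff.hasDerivAt
    have hcomp : HasDerivAt (β ∘ ψ) (‖deriv β s‖⁻¹ • deriv β s) (sβ s) :=
      HasDerivAt.scomp (sβ s) hβd (hψd s hs)
    have hder : deriv (β ∘ ψ) (sβ s) = ‖deriv β s‖⁻¹ • deriv β s := hcomp.deriv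
    have hβs : deriv β s = lam s • ξ (α s) := by rw [hβ]; exact hgeo s hs
    have hnorm : ‖deriv β s‖ = |lam s| := by
      rw [hβs, norm_smul, hξunit (α s) (hαM s hs), Real.norm_eq_abs, mul_one]
    rw [hder, hnorm, hβs, real_inner_smul_left, real_inner_smul_left,
      real_inner_comm, hc (α s) (hαM s hs)]
    ring
  constructor
  · intro s hs
    rw [mem_sphere_zero_iff_norm, hβ]
    exact hunit s hs
  · rcases Set.eq_empty_or_nonempty I with hI | ⟨s₀, hs₀⟩
    · exact ⟨0, fun s hs => absurd hs (hI ▸ Set.notMem_empty s)⟩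
    · refine ⟨(lam s₀ / |lam s₀|) * c, fun s hs => ?_⟩
      rw [key s hs]
      -- same sign of lam s and lam s₀
      have hsign : lam s / |lam s| = lam s₀ / |lam s₀| := by
        rcases lt_or_gt_of_ne (hlamne s hs) with hneg | hpos
        · rcases lt_or_gt_of_ne (hlamne s₀ hs₀) with hneg₀ | hpos₀
          · rw [abs_of_neg hneg, abs_of_neg hneg₀, div_neg_eq_neg_div,
              div_neg_eq_neg_div, div_self hneg.ne, div_self hneg₀.ne]
          · exfalso
            have h0 : (0 : ℝ) ∈ Set.Icc (lam s) (lam s₀) :=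
              ⟨hneg.le, hpos₀.le⟩
            obtain ⟨t, ht, ht0⟩ :=
              hconn.intermediate_value hs hs₀ hlamcont h0
            exact hlamne t ht ht0
        · rcases lt_or_gt_of_ne (hlamne s₀ hs₀) with hneg₀ | hpos₀
          · exfalso
            have h0 : (0 : ℝ) ∈ Set.Icc (lam s₀) (lam s) :=
              ⟨hneg₀.le, hpos.le⟩
            obtain ⟨t, ht, ht0⟩ :=
              hconn.intermediate_value hs₀ hs hlamcont h0
            exact hlamne t ht ht0
          · rw [abs_of_pos hpos, abs_of_pos hpos₀, div_self hpos.ne',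
              div_self hpos₀.ne']
      rw [hsign]
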